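/- Suppose f belongs to the class of structured problems in the special case L(·) ≡ L > 0 and δ(·) ≡ δ ≥ 0. Then any sequence {(z_{k−1}, x_k, x̂_k)}_{k≥0} generated by the classical gradient method with parameters λ_k := 1 and β_k := L/σ satisfies, for all k ≥ 0, f(x̂_k) − f(x*) ≤ (1/(k+1)) Σ_{i=0}^k f(x_{i+1}) − f(x*) ≤ L l_d(z_k; x*)/(σ(k+1)) + δ, and for all k ≥ −1 the points z_k, x_{k+1}, x̂_k lie in the set { x ∈ Q : ‖x − x*‖² ≤ 2 d(x*)/σ + (2δ/L)(k+1) }. -/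

import Mathlib

open Set Filter Topology

lemma aux_deriv_nonneg_at_min {E : Type*} [NormedAddCommGroup E] [NormedSpace ℝ E]
    (Q : Set E) (hQcv : Convex ℝ Q) (d : E → ℝ) (d' : E →L[ℝ] ℝ) (x₀ : E) (hx₀ : x₀ ∈ Q)
    (hdiff : HasFDerivWithinAt d d' Q x₀) (hmin : ∀ u ∈ Q, d x₀ ≤ d u)
    (y : E) (hy : y ∈ Q) :
    0 ≤ d' (y - x₀) := by
  set v := y - x₀ with hv
  set c : ℝ → E := fun t => x₀ + t • v with hc
  have hcd : HasDerivWithinAt c v (Icc (0:ℝ) 1) 0 := by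
    have h1 : HasDerivAt (fun t : ℝ => t • v) ((1:ℝ) • v) 0 := (hasDerivAt_id (0:ℝ)).smul_const v
    simpa [hc] using (h1.const_add x₀).hasDerivWithinAt
  have hmaps : MapsTo c (Icc (0:ℝ) 1) Q := by
    intro t ht
    have : c t = (1 - t) • x₀ + t • y := by simp only [hc, hv]; module
    rw [this]
    exact hQcv hx₀ hy (by linarith [ht.2]) ht.1 (by ring)
  have hcomp : HasDerivWithinAt (d ∘ c) (d' v) (Icc (0:ℝ) 1) 0 :=
    hdiff.comp_hasDerivWithinAt_of_eq 0 hcd hmaps (by simp [hc])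
  rw [hasDerivWithinAt_iff_tendsto_slope] at hcomp
  have hset : Icc (0:ℝ) 1 \ {0} = Ioc (0:ℝ) 1 := Icc_diff_left
  rw [hset] at hcomp
  haveI : (𝓝[Ioc (0:ℝ) 1] 0).NeBot := by
    refine mem_closure_iff_nhdsWithin_neBot.mp ?_
    rw [closure_Ioc one_ne_zero.symm]
    exact left_mem_Icc.2 zero_le_one
  refine ge_of_tendsto hcomp ?_
  filter_upwards [eventually_mem_nhdsWithin] with t ht
  have h0 : (d ∘ c) 0 = d x₀ := by simp [hc]
  have hle : d x₀ ≤ (d ∘ c) t := hmin _ (hmaps (Ioc_subset_Icc_self ht))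
  rw [slope_def_field, h0]
  exact div_nonneg (by linarith) (by simpa using ht.1.le)

lemma aux_convexOn_normsq {E : Type*} [NormedAddCommGroup E] [NormedSpace ℝ E] (xs : E) :
    ConvexOn ℝ Set.univ (fun u : E => ‖u - xs‖ ^ 2) := by
  refine ⟨convex_univ, fun a _ b _ ta tb hta htb hab => ?_⟩
  have key : ta • a + tb • b - xs = ta • (a - xs) + tb • (b - xs) := by
    have h2 : ta • a + tb • b - xs
        = ta • (a - xs) + tb • (b - xs) + ((ta + tb) - 1) • xs := by module
    rw [h2, hab]; simp
  have h1 : ‖ta • a + tb • b - xs‖ ≤ ta * ‖a - xs‖ + tb * ‖b - xs‖ := by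
    rw [key]
    calc ‖ta • (a - xs) + tb • (b - xs)‖ ≤ ‖ta • (a - xs)‖ + ‖tb • (b - xs)‖ := norm_add_le _ _
    _ = ta * ‖a - xs‖ + tb * ‖b - xs‖ := by
        rw [norm_smul, norm_smul, Real.norm_eq_abs, Real.norm_eq_abs, abs_of_nonneg hta,
          abs_of_nonneg htb]
  simp only [smul_eq_mul]
  nlinarith [norm_nonneg (ta • a + tb • b - xs), norm_nonneg (a - xs), norm_nonneg (b - xs),
    sq_nonneg (‖a - xs‖ - ‖b - xs‖), mul_nonneg hta htb]



/-- Corollary 5.2 (a): the classical gradient method with `λ_k = 1`, `β_k = L/σ` for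
structured problems with constant `L(·) ≡ L`, `δ(·) ≡ δ`: rate `L l_d(z_k;x*)/(σ(k+1)) + δ`
and boundedness of the iterates.  (Indices shifted: `z n`, `β n` stand for the paper's
`z_{n-1}`, `β_{n-1}`.) -/
theorem classical_gradient_method_constant_parameters
    {E : Type*} [NormedAddCommGroup E] [NormedSpace ℝ E] [FiniteDimensional ℝ E]
    (Q : Set E) (hQne : Q.Nonempty) (hQcl : IsClosed Q) (hQcv : Convex ℝ Q)
    (f : E → ℝ) (hf_cv : ConvexOn ℝ Q f) (hf_lsc : LowerSemicontinuousOn f Q)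
    (σ : ℝ) (hσ : 0 < σ)
    (d : E → ℝ) (d' : E → E →L[ℝ] ℝ)
    (hd_sc : StrongConvexOn Q σ d)
    (hd_diff : ∀ y ∈ Q, HasFDerivWithinAt d (d' y) Q y)
    (x₀ : E) (hx₀Q : x₀ ∈ Q) (hdx₀ : d x₀ = 0) (hd_nonneg : ∀ u ∈ Q, 0 ≤ d u)
    (hBreg : ∀ w ∈ Q, ∀ u ∈ Q, σ / 2 * ‖u - w‖ ^ 2 ≤ d u - d w - d' w (u - w))
    (lam : ℕ → ℝ) (hlam : ∀ k, 0 < lam k)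
    (β : ℕ → ℝ) (hβ0 : 0 < β 0) (hβmono : ∀ k, β k ≤ β (k + 1))
    (x : ℕ → E) (hxQ : ∀ k, x k ∈ Q)
    (ψ : ℕ → E → ℝ) (z : ℕ → E)
    (hzQ : ∀ n, z n ∈ Q) (hzmin : ∀ n, ∀ u ∈ Q, ψ n (z n) ≤ ψ n u)
    (lf : E → E → ℝ) (Lc δc : ℝ) (hLc : 0 < Lc) (hδc : 0 ≤ δc)
    (hlf_cv : ∀ y ∈ Q, ConvexOn ℝ Q (lf y))
    (hlf_lsc : ∀ y ∈ Q, LowerSemicontinuousOn (lf y) Q)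
    (hlf_lb : ∀ y ∈ Q, ∀ u ∈ Q, lf y u ≤ f u)
    (hlf_ub : ∀ y ∈ Q, ∀ u ∈ Q, f u ≤ lf y u + Lc / 2 * ‖u - y‖ ^ 2 + δc)
    (hP1a : ψ 0 (z 0) = 0) (hP1b : z 0 = x₀)
    (hP2 : ∀ n : ℕ, ∀ u ∈ Q,
      ψ n (z n) + lam n * lf (x n) u + β (n + 1) * d u
        - β n * (d (z n) + d' (z n) (u - z n)) ≤ ψ (n + 1) u)
    (hP3 : ∀ k : ℕ, ∀ u ∈ Q,
      ψ (k + 1) (z (k + 1)) ≤ (∑ i ∈ Finset.range (k + 1), lam i * lf (x i) u)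
        + β (k + 1) * (d (z (k + 1)) + d' (z (k + 1)) (u - z (k + 1))))
    (xs : E) (hxsQ : xs ∈ Q) (hxs_opt : ∀ u ∈ Q, f xs ≤ f u)
    (xhat : ℕ → E)
    (hlam1 : ∀ k, lam k = 1) (hβL : ∀ n, β n = Lc / σ)
    (hmx : ∀ k, x k = z k)
    (hmxhat : ∀ k, xhat k = (∑ i ∈ Finset.range (k + 1), lam i)⁻¹ • ∑ i ∈ Finset.range (k + 1), lam i • x (i + 1)) :
    (∀ k : ℕ,
      f (xhat k) - f xs ≤ ((k : ℝ) + 1)⁻¹ * (∑ i ∈ Finset.range (k + 1), f (x (i + 1))) - f xs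
      ∧ ((k : ℝ) + 1)⁻¹ * (∑ i ∈ Finset.range (k + 1), f (x (i + 1))) - f xs ≤
        Lc * (d (z (k + 1)) + d' (z (k + 1)) (xs - z (k + 1))) / (σ * ((k : ℝ) + 1)) + δc)
    ∧ (∀ n : ℕ,
      (z n ∈ Q ∧ ‖z n - xs‖ ^ 2 ≤ 2 * d xs / σ + 2 * δc / Lc * (n : ℝ)) ∧
      (x n ∈ Q ∧ ‖x n - xs‖ ^ 2 ≤ 2 * d xs / σ + 2 * δc / Lc * (n : ℝ)))
    ∧ (∀ k : ℕ,
      xhat k ∈ Q ∧ ‖xhat k - xs‖ ^ 2 ≤ 2 * d xs / σ + 2 * δc / Lc * ((k : ℝ) + 1)) := by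
  have hσ0 : (σ:ℝ) ≠ 0 := hσ.ne'
  have hLc0 : Lc ≠ 0 := hLc.ne'
  set B : ℝ := Lc / σ with hBdef
  have hBpos : 0 < B := div_pos hLc hσ
  have hBσ : B * σ = Lc := div_mul_cancel₀ _ hσ0
  -- Lemma A : one-step recursion
  have hA : ∀ n : ℕ, ψ n (z n) + f (x (n + 1)) - δc ≤ ψ (n + 1) (z (n + 1)) := by
    intro n
    have hu : z (n + 1) ∈ Q := hzQ (n + 1)
    have h2 := hP2 n (z (n + 1)) hu
    rw [hβL n, hβL (n + 1), hlam1 n, hmx n] at h2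
    have hbr := hBreg (z n) (hzQ n) (z (n + 1)) hu
    have hub := hlf_ub (x n) (hxQ n) (z (n + 1)) hu
    rw [hmx n] at hub
    have hp := mul_le_mul_of_nonneg_left hbr hBpos.le
    have hp' : Lc / 2 * ‖z (n + 1) - z n‖ ^ 2
        ≤ B * (d (z (n + 1)) - d (z n) - (d' (z n)) (z (n + 1) - z n)) := by
      refine le_trans (le_of_eq ?_) hp
      rw [hBdef]; field_simp
    rw [hmx (n + 1)]
    linarith
  -- Lemma B : telescoped lower bound on ψ n (z n)
  have hLB : ∀ n : ℕ, (∑ i ∈ Finset.range n, (f (x (i + 1)) - δc)) ≤ ψ n (z n) := by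
    intro n
    induction n with
    | zero => simp [hP1a]
    | succ m ih =>
        rw [Finset.sum_range_succ]
        have := hA m
        linarith
  -- Lower bound with f xs
  have hLB2 : ∀ n : ℕ, (n : ℝ) * (f xs - δc) ≤ ψ n (z n) := by
    intro n
    refine le_trans ?_ (hLB n)
    have h := Finset.card_nsmul_le_sum (Finset.range n) (fun i => f (x (i + 1)) - δc)
      (f xs - δc) (fun i _ => by
        show f xs - δc ≤ f (x (i + 1)) - δc
        have := hxs_opt (x (i + 1)) (hxQ (i + 1)); linarith)
    simpa [nsmul_eq_mul] using h
  -- Lemma C : upper bound from Property 1(iii)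
  have hC : ∀ k : ℕ, ψ (k + 1) (z (k + 1)) ≤ ((k : ℝ) + 1) * f xs
      + B * (d (z (k + 1)) + (d' (z (k + 1))) (xs - z (k + 1))) := by
    intro k
    have h3 := hP3 k xs hxsQ
    rw [hβL (k + 1)] at h3
    refine h3.trans ?_
    have hsum : (∑ i ∈ Finset.range (k + 1), lam i * lf (x i) xs)
        ≤ ((k : ℝ) + 1) * f xs := by
      have : ∀ i ∈ Finset.range (k + 1), lam i * lf (x i) xs ≤ f xs := by
        intro i _
        rw [hlam1 i, one_mul]
        exact hlf_lb (x i) (hxQ i) xs hxsQ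
      calc (∑ i ∈ Finset.range (k + 1), lam i * lf (x i) xs)
          ≤ ∑ _i ∈ Finset.range (k + 1), f xs := Finset.sum_le_sum this
        _ = ((k : ℝ) + 1) * f xs := by
            rw [Finset.sum_const, Finset.card_range, nsmul_eq_mul]; push_cast; ring
    linarith
  -- rate estimate (second inequality of part 1)
  have hrate : ∀ k : ℕ,
      ((k : ℝ) + 1)⁻¹ * (∑ i ∈ Finset.range (k + 1), f (x (i + 1))) - f xs ≤
        Lc * (d (z (k + 1)) + (d' (z (k + 1))) (xs - z (k + 1))) / (σ * ((k : ℝ) + 1)) + δc := by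
    intro k
    have hk1 : (0:ℝ) < (k : ℝ) + 1 := by positivity
    set ℓ : ℝ := d (z (k + 1)) + (d' (z (k + 1))) (xs - z (k + 1)) with hℓ
    have hsum_eq : (∑ i ∈ Finset.range (k + 1), (f (x (i + 1)) - δc))
        = (∑ i ∈ Finset.range (k + 1), f (x (i + 1))) - ((k : ℝ) + 1) * δc := by
      rw [Finset.sum_sub_distrib, Finset.sum_const, Finset.card_range, nsmul_eq_mul]
      push_cast; ring
    have key : (∑ i ∈ Finset.range (k + 1), f (x (i + 1)))
        ≤ ((k : ℝ) + 1) * f xs + B * ℓ + ((k : ℝ) + 1) * δc := by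
      have h1 := hLB (k + 1)
      push_cast at h1
      rw [hsum_eq] at h1
      have h2 := hC k
      rw [← hℓ] at h2
      linarith
    have h3 := mul_le_mul_of_nonneg_left key (inv_nonneg.2 hk1.le)
    have h4 : ((k : ℝ) + 1)⁻¹ * (((k : ℝ) + 1) * f xs + B * ℓ + ((k : ℝ) + 1) * δc)
        = f xs + Lc * ℓ / (σ * ((k : ℝ) + 1)) + δc := by
      rw [hBdef]; field_simp
    rw [h4] at h3
    linarith
  -- xhat as explicit average
  have hxhat_eq : ∀ k : ℕ, xhat k
      = ∑ i ∈ Finset.range (k + 1), ((k : ℝ) + 1)⁻¹ • x (i + 1) := by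
    intro k
    rw [hmxhat k]
    have h1 : (∑ i ∈ Finset.range (k + 1), lam i) = ((k : ℝ) + 1) := by
      simp [hlam1]
    rw [h1, Finset.smul_sum]
    refine Finset.sum_congr rfl fun i _ => ?_
    rw [hlam1 i, one_smul]
  have hwsum : ∀ k : ℕ, (∑ _i ∈ Finset.range (k + 1), ((k : ℝ) + 1)⁻¹) = 1 := by
    intro k
    rw [Finset.sum_const, Finset.card_range, nsmul_eq_mul]
    have hk1 : ((k : ℝ) + 1) ≠ 0 := by positivity
    push_cast
    field_simp
  have hwnn : ∀ k : ℕ, (0:ℝ) ≤ ((k : ℝ) + 1)⁻¹ := fun k => by positivity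
  have hxhatQ : ∀ k : ℕ, xhat k ∈ Q := by
    intro k
    rw [hxhat_eq k]
    exact hQcv.sum_mem (fun i _ => hwnn k) (hwsum k) (fun i _ => hxQ (i + 1))
  -- Jensen (first inequality of part 1)
  have hjensen : ∀ k : ℕ, f (xhat k)
      ≤ ((k : ℝ) + 1)⁻¹ * (∑ i ∈ Finset.range (k + 1), f (x (i + 1))) := by
    intro k
    have h := hf_cv.map_sum_le (t := Finset.range (k + 1))
      (w := fun _ => ((k : ℝ) + 1)⁻¹) (p := fun i => x (i + 1))
      (fun i _ => hwnn k) (hwsum k) (fun i _ => hxQ (i + 1))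
    rw [← hxhat_eq k] at h
    refine h.trans (le_of_eq ?_)
    simp only [Finset.mul_sum, smul_eq_mul]
  -- boundedness of z n
  have hzbound : ∀ n : ℕ, ‖z n - xs‖ ^ 2 ≤ 2 * d xs / σ + 2 * δc / Lc * (n : ℝ) := by
    intro n
    match n with
    | 0 =>
      have hder : 0 ≤ (d' x₀) (xs - x₀) :=
        aux_deriv_nonneg_at_min Q hQcv d (d' x₀) x₀ hx₀Q (hd_diff x₀ hx₀Q)
          (fun u hu => by rw [hdx₀]; exact hd_nonneg u hu) xs hxsQ
      have hbr := hBreg x₀ hx₀Q xs hxsQ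
      rw [hdx₀] at hbr
      have hN : ‖z 0 - xs‖ ^ 2 = ‖xs - x₀‖ ^ 2 := by rw [hP1b, norm_sub_rev]
      rw [hN]
      simp only [Nat.cast_zero, mul_zero, add_zero]
      rw [le_div_iff₀ hσ]
      nlinarith [hbr, hder]
    | (m + 1) =>
      have hbr := hBreg (z (m + 1)) (hzQ (m + 1)) xs hxsQ
      have hC' := hC m
      have hLB' := hLB2 (m + 1)
      push_cast at hLB' ⊢
      set N : ℝ := ‖xs - z (m + 1)‖ ^ 2 with hNdef
      have hNnn : 0 ≤ N := by rw [hNdef]; positivity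
      have hℓ : d (z (m + 1)) + (d' (z (m + 1))) (xs - z (m + 1)) ≤ d xs - σ / 2 * N := by
        linarith
      have hscaled := mul_le_mul_of_nonneg_left hℓ hBpos.le
      have hcomb : ((m : ℝ) + 1) * (f xs - δc)
          ≤ ((m : ℝ) + 1) * f xs + B * (d xs - σ / 2 * N) := by linarith
      have hBN : B * (σ / 2) * N = Lc / 2 * N := by
        rw [hBdef]; field_simp
      have h6 : Lc / 2 * N ≤ B * d xs + ((m : ℝ) + 1) * δc := by linarith [hcomb, hBN]
      have hNrev : ‖z (m + 1) - xs‖ ^ 2 = N := by rw [hNdef, norm_sub_rev]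
      rw [hNrev]
      have hpos : (0:ℝ) < Lc * σ := by positivity
      rw [← mul_le_mul_iff_right₀ hpos]
      have hR : Lc * σ * (2 * d xs / σ + 2 * δc / Lc * ((m : ℝ) + 1))
          = 2 * Lc * d xs + 2 * σ * δc * ((m : ℝ) + 1) := by field_simp
      rw [hR]
      have h7 := mul_le_mul_of_nonneg_left h6 (by positivity : (0:ℝ) ≤ 2 * σ)
      have h8 : 2 * σ * (B * d xs) = 2 * Lc * d xs := by rw [← hBσ]; ring
      linarith [h7, h8]
  have hRHSmono : ∀ a b : ℝ, a ≤ b →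
      2 * d xs / σ + 2 * δc / Lc * a ≤ 2 * d xs / σ + 2 * δc / Lc * b := by
    intro a b hab
    have : (0:ℝ) ≤ 2 * δc / Lc := by positivity
    nlinarith
  -- boundedness of xhat
  have hxhatbound : ∀ k : ℕ, ‖xhat k - xs‖ ^ 2
      ≤ 2 * d xs / σ + 2 * δc / Lc * ((k : ℝ) + 1) := by
    intro k
    have hjen := (aux_convexOn_normsq xs).map_sum_le (t := Finset.range (k + 1))
      (w := fun _ => ((k : ℝ) + 1)⁻¹) (p := fun i => x (i + 1))
      (fun i _ => hwnn k) (hwsum k) (fun i _ => Set.mem_univ _)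
    rw [← hxhat_eq k] at hjen
    refine hjen.trans ?_
    calc (∑ i ∈ Finset.range (k + 1), ((k : ℝ) + 1)⁻¹ • ‖x (i + 1) - xs‖ ^ 2)
        ≤ ∑ i ∈ Finset.range (k + 1),
            ((k : ℝ) + 1)⁻¹ * (2 * d xs / σ + 2 * δc / Lc * ((k : ℝ) + 1)) := by
          refine Finset.sum_le_sum fun i hi => ?_
          rw [smul_eq_mul]
          refine mul_le_mul_of_nonneg_left ?_ (hwnn k)
          have hb : ‖x (i + 1) - xs‖ ^ 2 ≤ 2 * d xs / σ + 2 * δc / Lc * ((i : ℝ) + 1) := by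
            rw [hmx (i + 1)]
            have h := hzbound (i + 1)
            push_cast at h
            exact h
          refine hb.trans (hRHSmono _ _ ?_)
          have hik : i < k + 1 := Finset.mem_range.mp hi
          have : (i : ℝ) ≤ (k : ℝ) := Nat.cast_le.mpr (by omega)
          linarith
      _ = 2 * d xs / σ + 2 * δc / Lc * ((k : ℝ) + 1) := by
          rw [Finset.sum_const, Finset.card_range, nsmul_eq_mul]
          have hk1 : ((k : ℝ) + 1) ≠ 0 := by positivity
          push_cast
          field_simp
  refine ⟨fun k => ⟨by have := hjensen k; linarith, hrate k⟩,
    fun n => ⟨⟨hzQ n, hzbound n⟩, ⟨hxQ n, by rw [hmx n]; exact hzbound n⟩⟩,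
    fun k => ⟨hxhatQ k, hxhatbound k⟩⟩
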